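/- Let A and B be self-adjoint linear operators on an n-dimensional complex inner product space, and let Ã = A + B. Let λ₁ ≥ ⋯ ≥ λₙ, e₁ ≥ ⋯ ≥ eₙ, λ̃₁ ≥ ⋯ ≥ λ̃ₙ be the eigenvalues of A, B, Ã respectively (with multiplicity). Then ∑_{j=1}^n |λ̃_j − λ_j| ≤ ∑_{j=1}^n |e_j|. -/

import Mathlib

open Matrix Finset ComplexOrder

namespace KyFan

variable {n : ℕ}


lemma dsum {ι : Type*} [Fintype ι] (u : Fin n → ℂ) (f : ι → Fin n → ℂ) :
    u ⬝ᵥ (∑ i, f i) = ∑ i, u ⬝ᵥ f i := by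
  simp only [dotProduct, Finset.sum_apply, Finset.mul_sum]
  exact Finset.sum_comm

lemma sumd {ι : Type*} [Fintype ι] (f : ι → Fin n → ℂ) (u : Fin n → ℂ) :
    (∑ i, f i) ⬝ᵥ u = ∑ i, f i ⬝ᵥ u := by
  simp only [dotProduct, Finset.sum_apply, Finset.sum_mul]
  exact Finset.sum_comm

lemma dot_single {ι : Type*} [Fintype ι] [DecidableEq ι]
    {v : ι → Fin n → ℂ}
    (hortho : ∀ i k, star (v i) ⬝ᵥ v k = if i = k then 1 else 0)
    (c : ι → ℂ) (i : ι) :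
    star (v i) ⬝ᵥ (∑ k, c k • v k) = c i := by
  rw [dsum]
  simp only [dotProduct_smul, hortho, smul_eq_mul, mul_ite, mul_one, mul_zero]
  simp

lemma li_of_ortho {ι : Type*} [Fintype ι] [DecidableEq ι]
    {v : ι → Fin n → ℂ}
    (hortho : ∀ i k, star (v i) ⬝ᵥ v k = if i = k then 1 else 0) :
    LinearIndependent ℂ v := by
  rw [Fintype.linearIndependent_iff]
  intro c hc i
  have := dot_single hortho c i
  rw [hc, dotProduct_zero] at this
  exact this.symm

lemma quad {ι : Type*} [Fintype ι] [DecidableEq ι] {M : Matrix (Fin n) (Fin n) ℂ}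
    {v : ι → Fin n → ℂ}
    (hortho : ∀ i k, star (v i) ⬝ᵥ v k = if i = k then 1 else 0)
    {μ : ι → ℝ} (hv : ∀ i, M *ᵥ v i = (μ i : ℂ) • v i) (c : ι → ℂ) :
    Complex.re (star (∑ i, c i • v i) ⬝ᵥ (M *ᵥ ∑ i, c i • v i))
      = ∑ i, μ i * Complex.normSq (c i) := by
  have h1 : M *ᵥ (∑ i, c i • v i) = ∑ i, ((μ i : ℂ) * c i) • v i := by
    rw [show M *ᵥ (∑ i, c i • v i) = M.mulVecLin (∑ i, c i • v i) from rfl, map_sum]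
    refine Finset.sum_congr rfl fun i _ => ?_
    rw [LinearMap.map_smul, mulVecLin_apply, hv i, smul_smul, mul_comm]
  have h2 : star (∑ i, c i • v i) = ∑ i, (starRingEnd ℂ (c i)) • star (v i) := by
    rw [star_sum]
    refine Finset.sum_congr rfl fun i _ => ?_
    rw [star_smul]; rfl
  rw [h1, h2, sumd]
  have h3 : ∀ i, (starRingEnd ℂ (c i)) • star (v i) ⬝ᵥ (∑ k, ((μ k : ℂ) * c k) • v k)
      = ((μ i * Complex.normSq (c i) : ℝ) : ℂ) := by
    intro i
    rw [smul_dotProduct, dsum]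
    simp only [dotProduct_smul, hortho, smul_eq_mul, mul_ite, mul_one, mul_zero]
    rw [Finset.sum_ite_eq, if_pos (Finset.mem_univ i)]
    push_cast
    rw [mul_comm ((μ i : ℂ)) (c i), ← mul_assoc, ← Complex.normSq_eq_conj_mul_self]
    push_cast
    ring
  rw [Finset.sum_congr rfl fun i _ => h3 i]
  rw [← Complex.ofReal_sum]
  exact Complex.ofReal_re _

lemma norm_sum {ι : Type*} [Fintype ι] [DecidableEq ι]
    {v : ι → Fin n → ℂ}
    (hortho : ∀ i k, star (v i) ⬝ᵥ v k = if i = k then 1 else 0) (c : ι → ℂ) :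
    Complex.re (star (∑ i, c i • v i) ⬝ᵥ (∑ i, c i • v i)) = ∑ i, Complex.normSq (c i) := by
  have := quad (M := (1 : Matrix (Fin n) (Fin n) ℂ)) hortho
    (μ := fun _ => (1:ℝ)) (fun i => by simp) c
  simpa using this


lemma re_pos_of_ne_zero {x : Fin n → ℂ} (hx : x ≠ 0) :
    0 < Complex.re (star x ⬝ᵥ x) := by
  have h : star x ⬝ᵥ x = ((∑ i, Complex.normSq (x i) : ℝ) : ℂ) := by
    push_cast
    simp only [dotProduct, Pi.star_apply, Complex.normSq_eq_conj_mul_self]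
    rfl
  rw [h, Complex.ofReal_re]
  have : ∃ i, x i ≠ 0 := by
    by_contra hc
    push_neg at hc
    exact hx (funext hc)
  obtain ⟨i, hi⟩ := this
  refine Finset.sum_pos' (fun k _ => Complex.normSq_nonneg _) ⟨i, Finset.mem_univ i, ?_⟩
  simpa [Complex.normSq_pos] using hi

lemma ortho_perm {M : Matrix (Fin n) (Fin n) ℂ} (hM : M.IsHermitian) (σ : Equiv.Perm (Fin n)) :
    ∀ i k, star (⇑(hM.eigenvectorBasis (σ i)) : Fin n → ℂ) ⬝ᵥ ⇑(hM.eigenvectorBasis (σ k))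
      = if i = k then 1 else 0 := by
  intro i k
  have h := hM.eigenvectorBasis.orthonormal
  rw [orthonormal_iff_ite] at h
  have h2 := h (σ i) (σ k)
  rw [EuclideanSpace.inner_eq_star_dotProduct, dotProduct_comm] at h2
  simpa [σ.injective.eq_iff] using h2

lemma weyl {M N : Matrix (Fin n) (Fin n) ℂ} (hM : M.IsHermitian) (hN : N.IsHermitian)
    (hP : (N - M).PosSemidef) {μ ν : Fin n → ℝ} (hμa : Antitone μ) (hνa : Antitone ν)
    (hμ : ∃ σ : Equiv.Perm (Fin n), μ = hM.eigenvalues ∘ σ)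
    (hν : ∃ σ : Equiv.Perm (Fin n), ν = hN.eigenvalues ∘ σ) (j : Fin n) : μ j ≤ ν j := by
  obtain ⟨σ, hσ⟩ := hμ
  obtain ⟨τ, hτ⟩ := hν
  set v : Fin n → Fin n → ℂ := fun i => ⇑(hM.eigenvectorBasis (σ i)) with hvdef
  set w : Fin n → Fin n → ℂ := fun i => ⇑(hN.eigenvectorBasis (τ i)) with hwdef
  have hvortho : ∀ i k, star (v i) ⬝ᵥ v k = if i = k then 1 else 0 := ortho_perm hM σ
  have hwortho : ∀ i k, star (w i) ⬝ᵥ w k = if i = k then 1 else 0 := ortho_perm hN τ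
  have hvM : ∀ i, M *ᵥ v i = (μ i : ℂ) • v i := by
    intro i
    have := hM.mulVec_eigenvectorBasis (σ i)
    rw [hσ]
    simp only [Function.comp_apply, hvdef]
    rw [this]
    funext t
    simp [Complex.real_smul]
  have hwN : ∀ i, N *ᵥ w i = (ν i : ℂ) • w i := by
    intro i
    have := hN.mulVec_eigenvectorBasis (τ i)
    rw [hτ]
    simp only [Function.comp_apply, hwdef]
    rw [this]
    funext t
    simp [Complex.real_smul]
  -- subspaces
  have hvortho' : ∀ i k : Set.Iic j, star ((fun i : Set.Iic j => v i) i) ⬝ᵥ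
      (fun i : Set.Iic j => v i) k = if i = k then 1 else 0 := by
    intro i k
    rw [hvortho]
    simp [Subtype.ext_iff]
  have hwortho' : ∀ i k : Set.Ici j, star ((fun i : Set.Ici j => w i) i) ⬝ᵥ
      (fun i : Set.Ici j => w i) k = if i = k then 1 else 0 := by
    intro i k
    rw [hwortho]
    simp [Subtype.ext_iff]
  set V : Submodule ℂ (Fin n → ℂ) :=
    Submodule.span ℂ (Set.range fun i : Set.Iic j => v i) with hVdef
  set W : Submodule ℂ (Fin n → ℂ) :=
    Submodule.span ℂ (Set.range fun i : Set.Ici j => w i) with hWdef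
  have hVrank : Module.finrank ℂ V = (j : ℕ) + 1 := by
    rw [hVdef, finrank_span_eq_card (li_of_ortho hvortho')]
    rw [← Fin.card_Iic j]; exact Fintype.card_ofFinset _ _
  have hWrank : Module.finrank ℂ W = n - (j : ℕ) := by
    rw [hWdef, finrank_span_eq_card (li_of_ortho hwortho')]
    rw [← Fin.card_Ici j]; exact Fintype.card_ofFinset _ _
  have hinter : ∃ x : Fin n → ℂ, x ∈ V ⊓ W ∧ x ≠ 0 := by
    have htot : Module.finrank ℂ (Fin n → ℂ) = n := Module.finrank_fin_fun ℂ
    have hsup : Module.finrank ℂ ↥(V ⊔ W) ≤ n := by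
      have h := Submodule.finrank_le (V ⊔ W)
      rw [htot] at h
      exact h
    have heq := Submodule.finrank_sup_add_finrank_inf_eq V W
    have hj : (j : ℕ) < n := j.isLt
    have hpos : 0 < Module.finrank ℂ ↥(V ⊓ W) := by omega
    have hne : V ⊓ W ≠ ⊥ := by
      intro hbot
      rw [hbot, finrank_bot] at hpos
      exact lt_irrefl 0 hpos
    obtain ⟨x, hx, hx0⟩ := Submodule.exists_mem_ne_zero_of_ne_bot hne
    exact ⟨x, hx, hx0⟩
  obtain ⟨x, ⟨hxV, hxW⟩, hx0⟩ := hinter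
  obtain ⟨c, hc⟩ := (Submodule.mem_span_range_iff_exists_fun ℂ).mp hxV
  obtain ⟨d, hd⟩ := (Submodule.mem_span_range_iff_exists_fun ℂ).mp hxW
  set t := Complex.re (star x ⬝ᵥ x) with htdef
  have ht : 0 < t := re_pos_of_ne_zero hx0
  -- lower bound for M
  have hMform : Complex.re (star x ⬝ᵥ (M *ᵥ x)) = ∑ i : Set.Iic j, μ i * Complex.normSq (c i) := by
    rw [← hc]; exact quad hvortho' (fun i => hvM i) c
  have htc : t = ∑ i : Set.Iic j, Complex.normSq (c i) := by
    rw [htdef, ← hc]; exact norm_sum hvortho' c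
  have htd : t = ∑ i : Set.Ici j, Complex.normSq (d i) := by
    rw [htdef, ← hd]; exact norm_sum hwortho' d
  have hNform : Complex.re (star x ⬝ᵥ (N *ᵥ x)) = ∑ i : Set.Ici j, ν i * Complex.normSq (d i) := by
    rw [← hd]; exact quad hwortho' (fun i => hwN i) d
  have hlow : μ j * t ≤ Complex.re (star x ⬝ᵥ (M *ᵥ x)) := by
    rw [hMform, htc, Finset.mul_sum]
    refine Finset.sum_le_sum fun i _ => ?_
    exact mul_le_mul_of_nonneg_right (hμa i.2) (Complex.normSq_nonneg _)
  have hhigh : Complex.re (star x ⬝ᵥ (N *ᵥ x)) ≤ ν j * t := by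
    rw [hNform, htd, Finset.mul_sum]
    refine Finset.sum_le_sum fun i _ => ?_
    exact mul_le_mul_of_nonneg_right (hνa i.2) (Complex.normSq_nonneg _)
  have hpsd : Complex.re (star x ⬝ᵥ (M *ᵥ x)) ≤ Complex.re (star x ⬝ᵥ (N *ᵥ x)) := by
    have h := hP.dotProduct_mulVec_nonneg x
    rw [sub_mulVec, dotProduct_sub] at h
    have := Complex.le_def.mp h
    simp only [Complex.zero_re, Complex.sub_re] at this
    linarith [this.1]
  have : μ j * t ≤ ν j * t := le_trans hlow (le_trans hpsd hhigh)
  exact le_of_mul_le_mul_right (by linarith) ht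


variable {n : ℕ}

lemma trace_conj3 (U : Matrix.unitaryGroup (Fin n) ℂ) (d : Fin n → ℂ) :
    ((U : Matrix (Fin n) (Fin n) ℂ) * diagonal d * star (U : Matrix (Fin n) (Fin n) ℂ)).trace
      = ∑ i, d i := by
  rw [trace_mul_cycle, (Matrix.mem_unitaryGroup_iff').mp U.2, one_mul, trace_diagonal]

lemma retrace {A : Matrix (Fin n) (Fin n) ℂ} (hA : A.IsHermitian) :
    Complex.re A.trace = ∑ i, hA.eigenvalues i := by
  conv_lhs => rw [hA.spectral_theorem, Unitary.conjStarAlgAut_apply]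
  rw [trace_conj3 (hA.eigenvectorUnitary)]
  rw [show ∑ i, (RCLike.ofReal ∘ hA.eigenvalues) i = ((∑ i, hA.eigenvalues i : ℝ) : ℂ) by
    push_cast; rfl]
  exact Complex.ofReal_re _

lemma conj_psd (U : Matrix.unitaryGroup (Fin n) ℂ) {d : Fin n → ℝ} (hd : ∀ i, 0 ≤ d i) :
    ((U : Matrix (Fin n) (Fin n) ℂ) * diagonal (fun i => (d i : ℂ))
      * star (U : Matrix (Fin n) (Fin n) ℂ)).PosSemidef := by
  rw [Matrix.star_eq_conjTranspose]
  exact (Matrix.PosSemidef.diagonal (fun i => by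
    simpa using Complex.zero_le_real.mpr (hd i))).mul_mul_conjTranspose_same _

lemma exists_sorted (f : Fin n → ℝ) :
    ∃ (g : Fin n → ℝ) (σ : Equiv.Perm (Fin n)), Antitone g ∧ g = f ∘ σ := by
  refine ⟨(f ∘ Tuple.sort f) ∘ Fin.rev, (Fin.revPerm.trans (Tuple.sort f)), ?_, ?_⟩
  · exact (Tuple.monotone_sort f).comp_antitone fun i k h => Fin.rev_le_rev.mpr h
  · funext i
    simp [Equiv.trans, Function.comp]


end KyFan


open KyFan in
theorem stmt2 (n : ℕ) (A B : Matrix (Fin n) (Fin n) ℂ)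
    (hA : A.IsHermitian) (hB : B.IsHermitian) (hT : (A + B).IsHermitian)
    (lam e lamt : Fin n → ℝ)
    (hlam : Antitone lam) (he : Antitone e) (hlamt : Antitone lamt)
    (hlam' : ∃ σ : Equiv.Perm (Fin n), lam = hA.eigenvalues ∘ σ)
    (he' : ∃ σ : Equiv.Perm (Fin n), e = hB.eigenvalues ∘ σ)
    (hlamt' : ∃ σ : Equiv.Perm (Fin n), lamt = hT.eigenvalues ∘ σ) :
    ∑ j, |lamt j - lam j| ≤ ∑ j, |e j| := by
  classical
  set U := hB.eigenvectorUnitary with hUdef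
  set g : Fin n → ℝ := fun i => max (hB.eigenvalues i) 0 with hgdef
  set Bp : Matrix (Fin n) (Fin n) ℂ :=
    (U : Matrix (Fin n) (Fin n) ℂ) * diagonal (fun i => (g i : ℂ))
      * star (U : Matrix (Fin n) (Fin n) ℂ) with hBpdef
  have hBpPSD : Bp.PosSemidef := conj_psd U fun i => le_max_right _ _
  have hBspec : B = (U : Matrix (Fin n) (Fin n) ℂ)
      * diagonal (fun i => ((hB.eigenvalues i : ℝ) : ℂ)) * star (U : Matrix (Fin n) (Fin n) ℂ) :=
    hB.spectral_theorem
  have hBmB : Bp - B = (U : Matrix (Fin n) (Fin n) ℂ)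
      * diagonal (fun i => ((g i - hB.eigenvalues i : ℝ) : ℂ))
      * star (U : Matrix (Fin n) (Fin n) ℂ) := by
    conv_lhs => rw [hBpdef, hBspec]
    rw [← sub_mul, ← mul_sub, diagonal_sub]
    congr 2
    funext i
    push_cast
    simp
  have hBmBPSD : (Bp - B).PosSemidef := by
    rw [hBmB]
    exact conj_psd U fun i => by simp [hgdef]
  set C : Matrix (Fin n) (Fin n) ℂ := A + Bp with hCdef
  have hC : C.IsHermitian := hA.add hBpPSD.1
  obtain ⟨γ, σC, hγa, hγ⟩ := exists_sorted hC.eigenvalues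
  have hw1 : ∀ j, lam j ≤ γ j := by
    intro j
    refine weyl hA hC ?_ hlam hγa hlam' ⟨σC, hγ⟩ j
    have : C - A = Bp := by rw [hCdef]; exact add_sub_cancel_left A Bp
    rw [this]; exact hBpPSD
  have hw2 : ∀ j, lamt j ≤ γ j := by
    intro j
    refine weyl hT hC ?_ hlamt hγa hlamt' ⟨σC, hγ⟩ j
    have : C - (A + B) = Bp - B := by rw [hCdef]; abel
    rw [this]; exact hBmBPSD
  -- sums
  have hsum_perm : ∀ (f : Fin n → ℝ) (σ : Equiv.Perm (Fin n)), ∑ j, f (σ j) = ∑ j, f j :=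
    fun f σ => Equiv.sum_comp σ f
  obtain ⟨σA, hσA⟩ := hlam'
  obtain ⟨σB, hσB⟩ := he'
  obtain ⟨σT, hσT⟩ := hlamt'
  have hlam_sum : ∑ j, lam j = Complex.re A.trace := by
    rw [retrace hA, hσA]; exact hsum_perm _ σA
  have hlamt_sum : ∑ j, lamt j = Complex.re (A + B).trace := by
    rw [retrace hT, hσT]; exact hsum_perm _ σT
  have hγ_sum : ∑ j, γ j = Complex.re C.trace := by
    rw [retrace hC, hγ]; exact hsum_perm _ σC
  have hBp_tr : Complex.re Bp.trace = ∑ i, g i := by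
    rw [hBpdef, trace_conj3]
    rw [show ∑ i, ((g i : ℝ) : ℂ) = ((∑ i, g i : ℝ) : ℂ) by push_cast; rfl]
    exact Complex.ofReal_re _
  have hB_tr : Complex.re B.trace = ∑ i, hB.eigenvalues i := retrace hB
  have hCtr : Complex.re C.trace = Complex.re A.trace + ∑ i, g i := by
    rw [hCdef, trace_add, Complex.add_re, hBp_tr]
  have hTtr : Complex.re (A + B).trace = Complex.re A.trace + ∑ i, hB.eigenvalues i := by
    rw [trace_add, Complex.add_re, hB_tr]
  have step1 : ∑ j, |lamt j - lam j| ≤ ∑ j, (2 * γ j - lam j - lamt j) := by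
    refine Finset.sum_le_sum fun j _ => ?_
    have h1 := hw1 j
    have h2 := hw2 j
    rw [abs_le]
    constructor <;> linarith
  have step2 : ∑ j, (2 * γ j - lam j - lamt j)
      = 2 * (∑ j, γ j) - (∑ j, lam j) - (∑ j, lamt j) := by
    rw [Finset.sum_sub_distrib, Finset.sum_sub_distrib, Finset.mul_sum]
  have step3 : 2 * (∑ j, γ j) - (∑ j, lam j) - (∑ j, lamt j)
      = ∑ i, (2 * g i - hB.eigenvalues i) := by
    rw [hγ_sum, hlam_sum, hlamt_sum, hCtr, hTtr, Finset.sum_sub_distrib, ← Finset.mul_sum]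
    ring
  have step4 : ∑ i, (2 * g i - hB.eigenvalues i) = ∑ i, |hB.eigenvalues i| := by
    refine Finset.sum_congr rfl fun i _ => ?_
    simp only [hgdef]
    rcases le_total (hB.eigenvalues i) 0 with h | h
    · rw [max_eq_right h, abs_of_nonpos h]; ring
    · rw [max_eq_left h, abs_of_nonneg h]; ring
  have step5 : ∑ i, |hB.eigenvalues i| = ∑ j, |e j| := by
    rw [hσB]
    exact (hsum_perm (fun i => |hB.eigenvalues i|) σB).symm
  linarith [step1, step2.le, step3.le, step4.le, step5.le]
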